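/- Let κ > 1 and let 0 < δ < 1/4 satisfy 1 − 2δ > δ^{1−1/κ}. Let G be a bipartite graph with parts U and R. Then there exists a nonempty subset U' ⊆ U such that: (1) every u ∈ U' has degree in [δ²·d_avg(U'), δ^{−2}·d_avg(U')]; (2) d_avg(U') ≥ δ·d_avg(U); and (3) for every real x ≥ κ, |U'|·d_avg(U')^x ≥ δ^x·|U|·d_avg(U)^x; where d_avg(S) denotes the average degree over S of the vertices of S in G. -/

import Mathlib

open scoped Classical
open Finset

/-- Average degree over `S` of vertices of `S` in the bipartite graph given by the
relation `E : U → R → Prop`. -/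
noncomputable def davg {U R : Type*} [Fintype U] [Fintype R] (E : U → R → Prop)
    (S : Finset U) : ℝ :=
  (∑ u ∈ S, ((Finset.univ.filter fun r => E u r).card : ℝ)) / S.card

theorem stmt_5 {U R : Type*} [Fintype U] [Fintype R] [Nonempty U]
    (E : U → R → Prop) (κ δ : ℝ) (hκ : 1 < κ) (hδ₀ : 0 < δ) (hδ₁ : δ < 1/4)
    (hδκ : δ ^ (1 - 1/κ) < 1 - 2*δ) :
    ∃ U' : Finset U, U'.Nonempty ∧
      (∀ u ∈ U', δ^2 * davg E U' ≤ ((Finset.univ.filter fun r => E u r).card : ℝ) ∧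
        ((Finset.univ.filter fun r => E u r).card : ℝ) ≤ δ⁻¹^2 * davg E U') ∧
      δ * davg E Finset.univ ≤ davg E U' ∧
      (∀ x : ℝ, κ ≤ x →
        δ ^ x * (Fintype.card U : ℝ) * (davg E Finset.univ) ^ x ≤
          (U'.card : ℝ) * (davg E U') ^ x) := by
  classical
  set w : U → ℝ := fun u => ((Finset.univ.filter fun r => E u r).card : ℝ) with hw
  have hw0 : ∀ u, 0 ≤ w u := fun u => by positivity
  have hn0 : (0:ℝ) < (Fintype.card U : ℝ) := by exact_mod_cast Fintype.card_pos
  set n : ℝ := (Fintype.card U : ℝ) with hn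
  set d : ℝ := davg E Finset.univ with hd
  have hδ1 : δ < 1 := by linarith
  have hdef : d = (∑ u, w u) / n := by
    simp [hd, davg, hn, hw]
  have hsum : ∑ u, w u = n * d := by
    rw [hdef]; field_simp
  have hd0 : 0 ≤ d := by
    rw [hdef]
    apply div_nonneg _ hn0.le
    exact Finset.sum_nonneg fun u _ => hw0 u
  rcases eq_or_lt_of_le hd0 with hd0' | hdpos
  · -- degenerate case: all degrees are zero
    have h00 : ∑ u, w u = 0 := by rw [hsum, ← hd0']; ring
    have hsz : ∀ u : U, w u = 0 := fun u =>
      (Finset.sum_eq_zero_iff_of_nonneg fun v _ => hw0 v).1 h00 u (mem_univ u)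
    have h1 : davg E univ = 0 := by rw [← hd, ← hd0']
    refine ⟨univ, univ_nonempty, ?_, ?_, ?_⟩
    · intro u hu
      show δ^2 * davg E univ ≤ w u ∧ w u ≤ δ⁻¹^2 * davg E univ
      rw [h1, hsz u]
      norm_num
    · rw [h1, ← hd0']
      simp
    · intro x hx
      have hx0 : x ≠ 0 := by intro h; rw [h] at hx; linarith
      rw [h1, ← hd0', Real.zero_rpow hx0]
      simp
  -- main case: d > 0
  · obtain ⟨J, hJ⟩ : ∃ J : ℕ, δ ^ J < 1 / n :=
      exists_pow_lt_of_lt_one (by positivity) hδ1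
    have hwle : ∀ u, w u ≤ n * d := by
      intro u
      rw [← hsum]
      exact Finset.single_le_sum (fun v _ => hw0 v) (mem_univ u)
    have hexJ : ∀ u : U, δ ^ (J+1) * w u ≤ δ * d := by
      intro u
      have h1 : δ ^ J * w u ≤ δ ^ J * (n * d) :=
        mul_le_mul_of_nonneg_left (hwle u) (by positivity)
      have h2 : δ ^ J * (n * d) ≤ (1/n) * (n * d) := by
        apply mul_le_mul_of_nonneg_right hJ.le (by positivity)
      have h3 : (1/n) * (n * d) = d := by field_simp
      calc δ ^ (J+1) * w u = δ * (δ ^ J * w u) := by ring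
        _ ≤ δ * d := by
            apply mul_le_mul_of_nonneg_left _ hδ₀.le
            linarith
    have hex : ∀ u : U, ∃ j : ℕ, δ ^ (j+1) * w u ≤ δ * d := fun u => ⟨J, hexJ u⟩
    set jf : U → ℕ := fun u => Nat.find (hex u) with hjf
    have hjfJ : ∀ u, jf u ≤ J := fun u => Nat.find_le (hexJ u)
    have hspec : ∀ u, δ ^ (jf u + 1) * w u ≤ δ * d := fun u => Nat.find_spec (hex u)
    have hup : ∀ u, δ ^ (jf u) * w u ≤ d := by
      intro u
      have := hspec u
      have h2 : δ * (δ ^ (jf u) * w u) ≤ δ * d := by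
        calc δ * (δ ^ (jf u) * w u) = δ ^ (jf u + 1) * w u := by ring
          _ ≤ δ * d := this
      exact le_of_mul_le_mul_left h2 hδ₀
    have hmin : ∀ u, δ * d < w u → δ * d < δ ^ (jf u) * w u := by
      intro u hu
      rcases Nat.eq_zero_or_pos (jf u) with h0 | hpos
      · rw [h0]; simpa using hu
      · obtain ⟨k, hk⟩ : ∃ k, jf u = k + 1 :=
          ⟨jf u - 1, (Nat.succ_pred_eq_of_pos hpos).symm⟩
        have hklt : k < jf u := by rw [hk]; exact k.lt_succ_self
        have := Nat.find_min (hex u) (show k < Nat.find (hex u) from hklt)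
        push_neg at this
        rw [hk]
        exact this
    set H : Finset U := univ.filter (fun u => δ * d < w u) with hH
    set C : ℕ → Finset U := fun j => H.filter (fun u => jf u = j) with hC
    -- facts about averages of buckets
    have hCfacts : ∀ j : ℕ, (C j).Nonempty →
        0 < davg E (C j) ∧ δ * d < δ ^ j * davg E (C j) ∧ δ ^ j * davg E (C j) ≤ d := by
      intro j hne
      have hm0 : (0:ℝ) < ((C j).card : ℝ) := by exact_mod_cast hne.card_pos
      have hmem : ∀ u ∈ C j, δ * d < δ ^ j * w u ∧ δ ^ j * w u ≤ d := by
        intro u hu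
        rw [hC] at hu
        simp only [Finset.mem_filter, hH, Finset.mem_univ, true_and] at hu
        obtain ⟨hu1, hu2⟩ := hu
        constructor
        · have := hmin u hu1; rwa [hu2] at this
        · have := hup u; rwa [hu2] at this
      have havg : davg E (C j) = (∑ u ∈ C j, w u) / ((C j).card : ℝ) := rfl
      have hlow : ((C j).card : ℝ) * (δ * d) < δ ^ j * ∑ u ∈ C j, w u := by
        rw [Finset.mul_sum]
        calc ((C j).card : ℝ) * (δ * d) = ∑ _u ∈ C j, δ * d := by
              rw [Finset.sum_const, nsmul_eq_mul]
          _ < ∑ u ∈ C j, δ ^ j * w u :=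
              Finset.sum_lt_sum_of_nonempty hne (fun u hu => (hmem u hu).1)
      have hhigh : δ ^ j * ∑ u ∈ C j, w u ≤ ((C j).card : ℝ) * d := by
        rw [Finset.mul_sum]
        calc ∑ u ∈ C j, δ ^ j * w u ≤ ∑ _u ∈ C j, d :=
              Finset.sum_le_sum (fun u hu => (hmem u hu).2)
          _ = ((C j).card : ℝ) * d := by rw [Finset.sum_const, nsmul_eq_mul]
      have h2 : δ * d < δ ^ j * davg E (C j) := by
        rw [havg, ← mul_div_assoc, lt_div_iff₀ hm0]
        linarith
      have h3 : δ ^ j * davg E (C j) ≤ d := by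
        rw [havg, ← mul_div_assoc, div_le_iff₀ hm0]
        linarith
      refine ⟨?_, h2, h3⟩
      have hdj : (0:ℝ) < δ ^ j := by positivity
      nlinarith [mul_pos hδ₀ hdpos]
    -- key claim
    set q : ℝ := δ ^ (κ - 1) with hq
    have hq0 : 0 ≤ q := Real.rpow_nonneg hδ₀.le _
    have hq1 : q < 1 - 2*δ := by
      have h1 : δ ^ (κ - 1) ≤ δ ^ (1 - 1/κ) := by
        apply Real.rpow_le_rpow_of_exponent_ge hδ₀ hδ1.le
        have hκ0 : 0 < κ := by linarith
        have h3 : 1/κ * κ = 1 := by field_simp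
        have h4 : 1/κ * κ^2 = κ := by field_simp
        nlinarith [mul_nonneg (by positivity : (0:ℝ) ≤ 1/κ) (sq_nonneg (κ-1))]
      linarith
    have hkey : ∃ j : ℕ, (C j).Nonempty ∧
        δ ^ κ * n * d ^ κ ≤ ((C j).card : ℝ) * (davg E (C j)) ^ κ := by
      by_contra hcon
      push_neg at hcon
      have hbucket : ∀ j : ℕ, ∑ u ∈ C j, w u ≤ n * d * δ * q ^ j := by
        intro j
        rcases Finset.eq_empty_or_nonempty (C j) with he | hne
        · rw [he]
          simp only [Finset.sum_empty]
          positivity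
        · obtain ⟨havgpos, hlo, hhi⟩ := hCfacts j hne
          have hm0 : (0:ℝ) < ((C j).card : ℝ) := by exact_mod_cast hne.card_pos
          set a : ℝ := davg E (C j) with ha
          have hsC : ∑ u ∈ C j, w u = ((C j).card : ℝ) * a := by
            rw [ha]
            simp only [davg, hw]
            rw [mul_div_assoc', eq_div_iff hm0.ne']; ring
          have hconj := hcon j hne
          -- a > δ*d/δ^j
          have hdj : (0:ℝ) < δ ^ j := by positivity
          have haglb : δ * d / δ ^ j ≤ a := by
            rw [div_le_iff₀ hdj]
            nlinarith
          have hexp : a ^ (1 - κ) ≤ (δ * d / δ ^ j) ^ (1 - κ) :=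
            Real.rpow_le_rpow_of_nonpos (by positivity) haglb (by linarith)
          have hmain : ((C j).card : ℝ) * a ≤
              (δ ^ κ * n * d ^ κ) * (δ * d / δ ^ j) ^ (1 - κ) := by
            have h1 : ((C j).card : ℝ) * a
                = (((C j).card : ℝ) * a ^ κ) * a ^ (1 - κ) := by
              rw [mul_assoc, ← Real.rpow_add havgpos]
              norm_num
            rw [h1]
            apply mul_le_mul hconj.le hexp (Real.rpow_nonneg havgpos.le _)
            positivity
          have e1 : δ * d / δ ^ j = δ ^ (1 - (j:ℝ)) * d := by
            rw [Real.rpow_sub hδ₀, Real.rpow_one, Real.rpow_natCast]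
            ring
          have e2 : (δ ^ (1 - (j:ℝ)) * d) ^ (1 - κ)
              = δ ^ ((1 - (j:ℝ)) * (1 - κ)) * d ^ (1 - κ) := by
            rw [Real.mul_rpow (Real.rpow_nonneg hδ₀.le _) hdpos.le,
              ← Real.rpow_mul hδ₀.le]
          have e3 : q ^ j = δ ^ ((κ - 1) * (j:ℝ)) := by
            rw [hq, ← Real.rpow_natCast (δ ^ (κ - 1)) j, ← Real.rpow_mul hδ₀.le]
          have heq : (δ ^ κ * n * d ^ κ) * (δ * d / δ ^ j) ^ (1 - κ)
              = n * d * δ * q ^ j := by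
            rw [e1, e2, e3]
            rw [show δ ^ κ * n * d ^ κ * (δ ^ ((1-(j:ℝ))*(1-κ)) * d ^ (1-κ)) =
                n * ((δ ^ κ * δ ^ ((1-(j:ℝ))*(1-κ))) * (d ^ κ * d ^ (1-κ))) from by
                ring]
            rw [← Real.rpow_add hδ₀, ← Real.rpow_add hdpos]
            rw [show κ + (1-(j:ℝ))*(1-κ) = 1 + (κ-1)*(j:ℝ) from by ring,
              show κ + (1-κ) = 1 from by ring,
              Real.rpow_add hδ₀, Real.rpow_one, Real.rpow_one]
            ring
          rw [hsC, ← heq]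
          exact hmain
      -- now sum everything
      have hfib : ∑ j ∈ Finset.range (J+1), ∑ u ∈ C j, w u = ∑ u ∈ H, w u := by
        rw [hC]
        exact Finset.sum_fiberwise_of_maps_to
          (fun u _ => Finset.mem_range.2 (Nat.lt_succ_of_le (hjfJ u))) w
      have hgeom : ∑ j ∈ Finset.range (J+1), q ^ j ≤ 1 / (1 - q) := by
        have hqlt1 : q < 1 := by linarith
        have h1q : 0 < 1 - q := by linarith
        have hqJ : (0:ℝ) ≤ q ^ (J+1) := by positivity
        rw [geom_sum_eq (ne_of_lt hqlt1)]
        rw [show (q ^ (J+1) - 1)/(q - 1) = (1 - q ^ (J+1))/(1 - q) from by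
          rw [← neg_div_neg_eq]; ring_nf]
        gcongr
        linarith
      have hHsum : ∑ u ∈ H, w u ≤ n * d * δ * (1 / (1 - q)) := by
        rw [← hfib]
        calc ∑ j ∈ Finset.range (J+1), ∑ u ∈ C j, w u
            ≤ ∑ j ∈ Finset.range (J+1), n * d * δ * q ^ j :=
              Finset.sum_le_sum (fun j _ => hbucket j)
          _ = n * d * δ * ∑ j ∈ Finset.range (J+1), q ^ j := by
              rw [Finset.mul_sum]
          _ ≤ n * d * δ * (1 / (1 - q)) := by
              apply mul_le_mul_of_nonneg_left hgeom (by positivity)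
      have hlowsum : ∑ u ∈ univ \ H, w u ≤ n * (δ * d) := by
        calc ∑ u ∈ univ \ H, w u ≤ ∑ _u ∈ univ \ H, δ * d := by
              apply Finset.sum_le_sum
              intro u hu
              rw [Finset.mem_sdiff, hH, Finset.mem_filter] at hu
              push_neg at hu
              exact hu.2 (mem_univ u)
          _ = ((univ \ H).card : ℝ) * (δ * d) := by
              rw [Finset.sum_const, nsmul_eq_mul]
          _ ≤ n * (δ * d) := by
              apply mul_le_mul_of_nonneg_right _ (by positivity)
              have hcc : (univ \ H).card ≤ Fintype.card U := by
                rw [← Finset.card_univ]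
                exact Finset.card_le_card (Finset.subset_univ _)
              rw [hn]
              exact_mod_cast hcc
      have hsplit : ∑ u, w u = ∑ u ∈ univ \ H, w u + ∑ u ∈ H, w u := by
        rw [Finset.sum_sdiff (Finset.subset_univ H)]
      have htot : n * d ≤ n * (δ * d) + n * d * δ * (1 / (1 - q)) := by
        have h := hsplit
        rw [hsum] at h
        linarith
      -- derive contradiction
      have h1q : 0 < 1 - q := by linarith
      have hfrac : δ * (1 / (1 - q)) < 1/2 := by
        rw [mul_one_div, div_lt_iff₀ h1q]
        nlinarith
      have hnd : 0 < n * d := by positivity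
      have e2 := mul_lt_mul_of_pos_left hfrac hnd
      have e3 := mul_lt_mul_of_pos_left hδ₁ hnd
      linarith
    obtain ⟨j, hne, hkey⟩ := hkey
    obtain ⟨havgpos, hlo, hhi⟩ := hCfacts j hne
    set a : ℝ := davg E (C j) with ha
    have hdj : (0:ℝ) < δ ^ j := by positivity
    have hdj1 : δ ^ j ≤ 1 := pow_le_one₀ hδ₀.le hδ1.le
    have havgd : δ * d ≤ a := by
      have h1 : δ ^ j * a ≤ a := mul_le_of_le_one_left havgpos.le hdj1
      linarith
    refine ⟨C j, hne, ?_, havgd, ?_⟩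
    · intro u hu
      have hu' : δ * d < δ ^ j * w u ∧ δ ^ j * w u ≤ d := by
        rw [hC] at hu
        simp only [Finset.mem_filter, hH, Finset.mem_univ, true_and] at hu
        obtain ⟨hu1, hu2⟩ := hu
        constructor
        · have := hmin u hu1; rwa [hu2] at this
        · have := hup u; rwa [hu2] at this
      have hwu0 := hw0 u
      have hwj0 : (0:ℝ) ≤ δ ^ j * w u := mul_nonneg hdj.le hwu0
      have haj0 : (0:ℝ) ≤ δ ^ j * a := by positivity
      constructor
      · -- δ^2 * a ≤ w u
        show δ^2 * a ≤ w u
        rw [← mul_le_mul_iff_right₀ hdj]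
        calc δ ^ j * (δ^2 * a) = δ^2 * (δ ^ j * a) := by ring
          _ ≤ δ^2 * d := mul_le_mul_of_nonneg_left hhi (by positivity)
          _ = δ * (δ * d) := by ring
          _ ≤ δ * (δ ^ j * w u) := mul_le_mul_of_nonneg_left hu'.1.le hδ₀.le
          _ ≤ 1 * (δ ^ j * w u) := mul_le_mul_of_nonneg_right hδ1.le hwj0
          _ = δ ^ j * w u := one_mul _
      · show w u ≤ δ⁻¹^2 * a
        rw [inv_pow, le_inv_mul_iff₀ (by positivity : (0:ℝ) < δ^2)]
        rw [← mul_le_mul_iff_right₀ hdj]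
        calc δ ^ j * (δ^2 * w u) = δ^2 * (δ ^ j * w u) := by ring
          _ ≤ δ^2 * d := mul_le_mul_of_nonneg_left hu'.2 (by positivity)
          _ = δ * (δ * d) := by ring
          _ ≤ δ * (δ ^ j * a) := mul_le_mul_of_nonneg_left hlo.le hδ₀.le
          _ ≤ 1 * (δ ^ j * a) := mul_le_mul_of_nonneg_right hδ1.le haj0
          _ = δ ^ j * a := one_mul _
    · intro x hx
      have hax : a ^ x = a ^ κ * a ^ (x - κ) := by
        rw [← Real.rpow_add havgpos]; ring_nf
      have h1 : (δ * d) ^ (x - κ) ≤ a ^ (x - κ) :=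
        Real.rpow_le_rpow (by positivity) havgd (by linarith)
      have h2 : ((C j).card : ℝ) * a ^ x ≥
          (δ ^ κ * n * d ^ κ) * ((δ*d) ^ (x-κ)) := by
        rw [hax, ← mul_assoc]
        apply mul_le_mul hkey h1 (Real.rpow_nonneg (by positivity) _) ?_
        have hm0 : (0:ℝ) ≤ ((C j).card : ℝ) := Nat.cast_nonneg _
        exact mul_nonneg hm0 (Real.rpow_nonneg havgpos.le _)
      have heq : (δ ^ κ * n * d ^ κ) * ((δ*d) ^ (x-κ)) = δ ^ x * n * d ^ x := by
        rw [Real.mul_rpow hδ₀.le hdpos.le]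
        rw [show (δ:ℝ) ^ κ * n * d ^ κ * (δ ^ (x-κ) * d ^ (x-κ))
            = n * ((δ ^ κ * δ ^ (x-κ)) * (d ^ κ * d ^ (x-κ))) by ring]
        rw [← Real.rpow_add hδ₀, ← Real.rpow_add hdpos]
        ring_nf
      rw [← ha]
      linarith [h2, heq.ge]
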